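/- Let α, β, p, q, k > 0 with kp < 1 and kq > 1. Every function x : ℝ → ℝ which satisfies x'(t) = -(α|x(t)|^p + β|x(t)|^q)^k · sign(x(t)) for all t ≥ 0 (with sign(0) = 0) satisfies x(t) = 0 for all t ≥ γ(α,β,p,q,k), regardless of the initial condition x(0). -/

import Mathlib

open MeasureTheory Set

lemma real_beta (a b : ℝ) (ha : 0 < a) (hb : 0 < b) :
    ∫ x in (0:ℝ)..1, x ^ (a-1) * (1-x) ^ (b-1)
      = Real.Gamma a * Real.Gamma b / Real.Gamma (a+b) := by
  have h := Complex.Gamma_mul_Gamma_eq_betaIntegral (s := (a:ℂ)) (t := (b:ℂ))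
    (by simpa using ha) (by simpa using hb)
  have hbeta : Complex.betaIntegral (a:ℂ) (b:ℂ)
      = ((∫ x in (0:ℝ)..1, x ^ (a-1) * (1-x) ^ (b-1) : ℝ) : ℂ) := by
    rw [Complex.betaIntegral, ← intervalIntegral.integral_ofReal]
    apply intervalIntegral.integral_congr
    intro x hx
    rw [Set.uIcc_of_le (by norm_num : (0:ℝ) ≤ 1)] at hx
    have hx0 : 0 ≤ x := hx.1
    have hx1 : 0 ≤ 1 - x := by linarith [hx.2]
    simp only [Complex.ofReal_mul, Complex.ofReal_cpow hx0, Complex.ofReal_cpow hx1]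
    push_cast
    ring
  rw [hbeta, ← Complex.ofReal_add, Complex.Gamma_ofReal, Complex.Gamma_ofReal,
    Complex.Gamma_ofReal, ← Complex.ofReal_mul, ← Complex.ofReal_mul] at h
  have h' := Complex.ofReal_injective h
  have hG : Real.Gamma (a+b) ≠ 0 := (Real.Gamma_pos_of_pos (by linarith)).ne'
  field_simp [h']
  rw [h']; ring

lemma beta_Ioi (a b : ℝ) (ha : 0 < a) (hb : 0 < b) :
    ∫ u in Ioi (0:ℝ), u ^ (a-1) * (1+u) ^ (-(a+b))
      = Real.Gamma a * Real.Gamma b / Real.Gamma (a+b) := by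
  have himg : (fun t : ℝ => t / (1 - t)) '' Ioo 0 1 = Ioi 0 := by
    ext y
    constructor
    · rintro ⟨t, ⟨ht0, ht1⟩, rfl⟩
      exact div_pos ht0 (by linarith)
    · intro hy
      rw [mem_Ioi] at hy
      refine ⟨y / (1 + y), ⟨div_pos hy (by linarith), ?_⟩, ?_⟩
      · rw [div_lt_one (by linarith)]; linarith
      · have h1 : (1:ℝ) + y ≠ 0 := by positivity
        field_simp
        ring
  have hderiv : ∀ t ∈ Ioo (0:ℝ) 1,
      HasDerivWithinAt (fun t : ℝ => t / (1 - t)) (((1 - t) ^ 2)⁻¹) (Ioo 0 1) t := by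
    intro t ht
    have hne : (1:ℝ) - t ≠ 0 := by rw [mem_Ioo] at ht; intro h; linarith [ht.2]
    have := (hasDerivAt_id t).div ((hasDerivAt_id t).const_sub 1) hne
    simp only [id] at this
    refine this.hasDerivWithinAt.congr_deriv ?_
    ring
  have hinj : InjOn (fun t : ℝ => t / (1 - t)) (Ioo 0 1) := by
    intro s hs t ht h
    rw [mem_Ioo] at hs ht
    have h1 : (1:ℝ) - s ≠ 0 := by intro h'; linarith [hs.2]
    have h2 : (1:ℝ) - t ≠ 0 := by intro h'; linarith [ht.2]
    field_simp at h
    nlinarith [h]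
  have := integral_image_eq_integral_abs_deriv_smul measurableSet_Ioo hderiv hinj
    (fun u : ℝ => u ^ (a-1) * (1+u) ^ (-(a+b)))
  rw [himg] at this
  rw [this]
  have heq : EqOn (fun t : ℝ => |((1 - t) ^ 2)⁻¹| •
      ((t / (1 - t)) ^ (a-1) * (1 + t / (1 - t)) ^ (-(a+b))))
      (fun t : ℝ => t ^ (a-1) * (1-t) ^ (b-1)) (Ioo 0 1) := by
    intro t ht
    rw [mem_Ioo] at ht
    have ht0 : 0 < t := ht.1
    have hu : 0 < 1 - t := by linarith [ht.2]
    have h1 : 1 + t / (1 - t) = (1 - t)⁻¹ := by field_simp; ring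
    simp only [smul_eq_mul, h1]
    have e1 : ((1-t)^2)⁻¹ = (1-t)^(-2:ℝ) := by
      rw [← Real.rpow_natCast (1-t) 2, ← Real.rpow_neg hu.le]; norm_num
    have e2 : (t/(1-t))^(a-1) = t^(a-1) * (1-t)^(-(a-1)) := by
      rw [Real.div_rpow ht0.le hu.le, Real.rpow_neg hu.le, div_eq_mul_inv]
    have e3 : ((1-t)⁻¹)^(-(a+b)) = (1-t)^(a+b) := by
      rw [Real.inv_rpow hu.le, ← Real.rpow_neg hu.le, neg_neg]
    rw [abs_of_pos (by positivity), e1, e2, e3,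
      show (1-t)^(-2:ℝ) * (t^(a-1) * (1-t)^(-(a-1)) * (1-t)^(a+b))
        = t^(a-1) * ((1-t)^(-2:ℝ) * ((1-t)^(-(a-1)) * (1-t)^(a+b))) from by ring,
      ← Real.rpow_add hu, ← Real.rpow_add hu]
    congr 1
    ring
  rw [setIntegral_congr_fun measurableSet_Ioo heq, ← integral_Ioc_eq_integral_Ioo,
    ← intervalIntegral.integral_of_le (by norm_num : (0:ℝ) ≤ 1)]
  exact real_beta a b ha hb

section main
variable {α β p q k : ℝ}

lemma F_integrable (hα : 0 < α) (hβ : 0 < β) (hp : 0 < p) (hq : 0 < q) (hk : 0 < k)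
    (hkp : k * p < 1) (hkq : 1 < k * q) :
    IntegrableOn (fun s : ℝ => (α * s ^ p + β * s ^ q) ^ (-k)) (Ioi (0:ℝ)) := by
  have hmeas : Measurable (fun s : ℝ => (α * s ^ p + β * s ^ q) ^ (-k)) := by
    fun_prop
  rw [← Ioc_union_Ioi_eq_Ioi (by norm_num : (0:ℝ) ≤ 1)]
  apply IntegrableOn.union
  · have hbound : IntegrableOn (fun s : ℝ => α ^ (-k) * s ^ (-(k*p))) (Ioc (0:ℝ) 1) := by
      apply Integrable.const_mul
      have := (intervalIntegral.intervalIntegrable_rpow' (a := (0:ℝ)) (b := 1)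
        (by linarith : (-1:ℝ) < -(k*p))).1
      exact (by simpa using this : IntegrableOn (fun x : ℝ => x ^ (-(k * p))) (Ioc 0 1))
    apply hbound.mono' (hmeas.aestronglyMeasurable.restrict)
    rw [ae_restrict_iff' measurableSet_Ioc]
    filter_upwards with s hs
    have hs0 : 0 < s := hs.1
    have h1 : 0 < α * s ^ p := by positivity
    have h2 : α * s ^ p ≤ α * s ^ p + β * s ^ q := le_add_of_nonneg_right (by positivity)
    have h3 : (α * s ^ p + β * s ^ q) ^ (-k) ≤ (α * s ^ p) ^ (-k) :=
      Real.rpow_le_rpow_of_nonpos h1 h2 (by linarith)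
    rw [Real.norm_eq_abs, abs_of_nonneg (Real.rpow_nonneg (by positivity) _)]
    calc (α * s ^ p + β * s ^ q) ^ (-k) ≤ (α * s ^ p) ^ (-k) := h3
      _ = α ^ (-k) * s ^ (-(k*p)) := by
          rw [Real.mul_rpow hα.le (Real.rpow_nonneg hs0.le _), ← Real.rpow_mul hs0.le]
          congr 1
          ring
  · have hbound : IntegrableOn (fun s : ℝ => β ^ (-k) * s ^ (-(k*q))) (Ioi (1:ℝ)) := by
      apply Integrable.const_mul
      exact integrableOn_Ioi_rpow_of_lt (by linarith : -(k*q) < -1) one_pos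
    apply hbound.mono' (hmeas.aestronglyMeasurable.restrict)
    rw [ae_restrict_iff' measurableSet_Ioi]
    filter_upwards with s hs
    rw [mem_Ioi] at hs
    have hs0 : (0:ℝ) < s := by linarith
    have h1 : 0 < β * s ^ q := by positivity
    have h2 : β * s ^ q ≤ α * s ^ p + β * s ^ q := le_add_of_nonneg_left (by positivity)
    have h3 : (α * s ^ p + β * s ^ q) ^ (-k) ≤ (β * s ^ q) ^ (-k) :=
      Real.rpow_le_rpow_of_nonpos h1 h2 (by linarith)
    rw [Real.norm_eq_abs, abs_of_nonneg (Real.rpow_nonneg (by positivity) _)]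
    calc (α * s ^ p + β * s ^ q) ^ (-k) ≤ (β * s ^ q) ^ (-k) := h3
      _ = β ^ (-k) * s ^ (-(k*q)) := by
          rw [Real.mul_rpow hβ.le (Real.rpow_nonneg hs0.le _), ← Real.rpow_mul hs0.le]
          congr 1
          ring

lemma F_integral_value (hα : 0 < α) (hβ : 0 < β) (hp : 0 < p) (hq : 0 < q) (hk : 0 < k)
    (hkp : k * p < 1) (hkq : 1 < k * q) :
    ∫ s in Ioi (0:ℝ), (α * s ^ p + β * s ^ q) ^ (-k)
      = Real.Gamma ((1 - k * p) / (q - p)) * Real.Gamma ((k * q - 1) / (q - p)) /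
        (α ^ k * Real.Gamma k * (q - p)) * (α / β) ^ ((1 - k * p) / (q - p)) := by
  have hpq : p < q := by
    have : k * p < k * q := by linarith
    exact lt_of_mul_lt_mul_left this hk.le
  have hqp : (0:ℝ) < q - p := by linarith
  set a := (1 - k * p) / (q - p) with ha_def
  set b := (k * q - 1) / (q - p) with hb_def
  have ha : 0 < a := div_pos (by linarith) hqp
  have hb : 0 < b := div_pos (by linarith) hqp
  have hab : a + b = k := by
    rw [ha_def, hb_def, ← add_div]
    rw [show 1 - k * p + (k * q - 1) = k * (q - p) from by ring]
    exact mul_div_cancel_right₀ k hqp.ne'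
  have hc : (0:ℝ) < β / α := div_pos hβ hα
  -- step 1 : rewrite the integrand
  have step1 : ∫ s in Ioi (0:ℝ), (α * s ^ p + β * s ^ q) ^ (-k)
      = ∫ s in Ioi (0:ℝ), α ^ (-k) * (s ^ (-(k*p)) * (1 + (β/α) * s ^ (q-p)) ^ (-k)) := by
    apply setIntegral_congr_fun measurableSet_Ioi
    intro s hs
    rw [mem_Ioi] at hs
    dsimp only
    have hsum : α * s ^ p + β * s ^ q = (α * s ^ p) * (1 + (β/α) * s ^ (q-p)) := by
      have hsq : s ^ p * s ^ (q-p) = s ^ q := by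
        rw [← Real.rpow_add hs]; ring_nf
      have h2 : α * s ^ p * ((β/α) * s ^ (q-p)) = β * s ^ q := by
        rw [show α * s ^ p * ((β/α) * s ^ (q-p)) = (α * (β/α)) * (s ^ p * s ^ (q-p)) from by
          ring, hsq, mul_div_cancel₀ β hα.ne']
      rw [mul_add, mul_one, h2]
    have hC : (0:ℝ) ≤ 1 + (β/α) * s ^ (q-p) := by positivity
    rw [hsum, Real.mul_rpow (by positivity) hC,
      Real.mul_rpow hα.le (Real.rpow_nonneg hs.le p), ← Real.rpow_mul hs.le,
      show p * -k = -(k*p) from by ring, mul_assoc]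
  rw [step1, MeasureTheory.integral_const_mul _ _]
  -- step 2 : substitution s = x ^ (1/(q-p))
  have hr : (0:ℝ) < (q-p)⁻¹ := by positivity
  have step2 : ∫ s in Ioi (0:ℝ), s ^ (-(k*p)) * (1 + (β/α) * s ^ (q-p)) ^ (-k)
      = ∫ x in Ioi (0:ℝ), (q-p)⁻¹ * (x ^ (a-1) * (1 + (β/α) * x) ^ (-k)) := by
    rw [← MeasureTheory.integral_comp_rpow_Ioi_of_pos
      (g := fun s => s ^ (-(k*p)) * (1 + (β/α) * s ^ (q-p)) ^ (-k)) hr]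
    apply setIntegral_congr_fun measurableSet_Ioi
    intro x hx
    rw [mem_Ioi] at hx
    dsimp only
    have e1 : (x ^ (q-p)⁻¹) ^ (q-p) = x := by
      rw [← Real.rpow_mul hx.le, inv_mul_cancel₀ hqp.ne', Real.rpow_one]
    have e2 : (x ^ (q-p)⁻¹) ^ (-(k*p)) = x ^ ((q-p)⁻¹ * -(k*p)) := by
      rw [← Real.rpow_mul hx.le]
    simp only [smul_eq_mul, e1, e2]
    rw [show (q-p)⁻¹ * x ^ ((q-p)⁻¹ - 1) * (x ^ ((q-p)⁻¹ * -(k*p)) * (1 + β/α * x) ^ (-k))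
        = (q-p)⁻¹ * ((x ^ ((q-p)⁻¹ - 1) * x ^ ((q-p)⁻¹ * -(k*p))) * (1 + β/α * x) ^ (-k))
        from by ring, ← Real.rpow_add hx]
    congr 2
    rw [ha_def]
    field_simp
    ring
  rw [step2, MeasureTheory.integral_const_mul _ _]
  -- step 3 : scaling x = (α/β) u
  have hscale := MeasureTheory.integral_comp_mul_left_Ioi
    (g := fun u : ℝ => u ^ (a-1) * (1+u) ^ (-k)) 0 hc
  rw [mul_zero] at hscale
  have step3 : ∫ x in Ioi (0:ℝ), x ^ (a-1) * (1 + (β/α) * x) ^ (-k)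
      = (β/α) ^ (-a) * ∫ u in Ioi (0:ℝ), u ^ (a-1) * (1+u) ^ (-k) := by
    have hcongr : ∫ x in Ioi (0:ℝ), ((β/α) * x) ^ (a-1) * (1 + (β/α) * x) ^ (-k)
        = ∫ x in Ioi (0:ℝ), (β/α) ^ (a-1) * (x ^ (a-1) * (1 + (β/α) * x) ^ (-k)) := by
      apply setIntegral_congr_fun measurableSet_Ioi
      intro x hx
      rw [mem_Ioi] at hx
      dsimp only
      rw [Real.mul_rpow hc.le hx.le]
      ring
    rw [hcongr, MeasureTheory.integral_const_mul _ _] at hscale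
    have hca : ((β:ℝ)/α) ^ (a-1) ≠ 0 := (Real.rpow_pos_of_pos hc _).ne'
    have := hscale
    rw [smul_eq_mul] at this
    have key : ∫ x in Ioi (0:ℝ), x ^ (a-1) * (1 + (β/α) * x) ^ (-k)
        = ((β/α) ^ (a-1))⁻¹ * ((β/α)⁻¹ * ∫ u in Ioi (0:ℝ), u ^ (a-1) * (1+u) ^ (-k)) := by
      rw [← this, ← mul_assoc, inv_mul_cancel₀ hca, one_mul]
    rw [key, ← Real.rpow_neg_one (β/α), ← Real.rpow_neg hc.le, ← mul_assoc,
      ← Real.rpow_add hc]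
    congr 2
    ring
  rw [step3]
  have hB : ∫ u in Ioi (0:ℝ), u ^ (a-1) * (1+u) ^ (-k)
      = Real.Gamma a * Real.Gamma b / Real.Gamma k := by
    rw [← hab]
    exact beta_Ioi a b ha hb
  rw [hB]
  have hfl : ((β:ℝ)/α) ^ (-a) = (α/β) ^ a := by
    rw [← inv_div α β, Real.inv_rpow (by positivity), ← Real.rpow_neg (by positivity), neg_neg]
  rw [hfl, Real.rpow_neg hα.le]
  have h1 : α ^ k ≠ 0 := (Real.rpow_pos_of_pos hα k).ne'
  have h2 : Real.Gamma k ≠ 0 := (Real.Gamma_pos_of_pos hk).ne'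
  field_simp

lemma G_hasDerivAt (hα : 0 < α) (hβ : 0 < β) (hp : 0 < p) (hq : 0 < q) (hk : 0 < k)
    (hkp : k * p < 1) (hkq : 1 < k * q) {v : ℝ} (hv : 0 < v) :
    HasDerivAt (fun w => ∫ s in (0:ℝ)..w, (α * s ^ p + β * s ^ q) ^ (-k))
      ((α * v ^ p + β * v ^ q) ^ (-k)) v := by
  have hmeas : Measurable (fun s : ℝ => (α * s ^ p + β * s ^ q) ^ (-k)) := by fun_prop
  apply intervalIntegral.integral_hasDerivAt_right
  · rw [intervalIntegrable_iff_integrableOn_Ioc_of_le hv.le]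
    exact (F_integrable hα hβ hp hq hk hkp hkq).mono_set Ioc_subset_Ioi_self
  · exact hmeas.stronglyMeasurable.stronglyMeasurableAtFilter
  · have h1 : ContinuousAt (fun s : ℝ => α * s ^ p + β * s ^ q) v := by
      apply ContinuousAt.add
      · exact continuousAt_const.mul (Real.continuousAt_rpow_const v p (Or.inr hp.le))
      · exact continuousAt_const.mul (Real.continuousAt_rpow_const v q (Or.inr hq.le))
    have hpos : 0 < α * v ^ p + β * v ^ q := by positivity
    exact h1.rpow_const (Or.inl hpos.ne')

lemma G_pos (hα : 0 < α) (hβ : 0 < β) (hp : 0 < p) (hq : 0 < q) (hk : 0 < k)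
    (hkp : k * p < 1) (hkq : 1 < k * q) {v : ℝ} (hv : 0 < v) :
    0 < ∫ s in (0:ℝ)..v, (α * s ^ p + β * s ^ q) ^ (-k) := by
  rw [intervalIntegral.integral_of_le hv.le]
  have hint : IntegrableOn (fun s : ℝ => (α * s ^ p + β * s ^ q) ^ (-k)) (Ioc 0 v) :=
    (F_integrable hα hβ hp hq hk hkp hkq).mono_set Ioc_subset_Ioi_self
  have hnn : 0 ≤ᵐ[volume.restrict (Ioc (0:ℝ) v)]
      (fun s : ℝ => (α * s ^ p + β * s ^ q) ^ (-k)) := by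
    refine (ae_restrict_iff' measurableSet_Ioc).mpr ?_
    filter_upwards with s hs
    have : 0 < α * s ^ p + β * s ^ q := by have := hs.1; positivity
    simp only [Pi.zero_apply]
    positivity
  rw [setIntegral_pos_iff_support_of_nonneg_ae hnn hint]
  have hsub : Ioc (0:ℝ) v ⊆ Function.support (fun s : ℝ => (α * s ^ p + β * s ^ q) ^ (-k)) := by
    intro s hs
    have h0 : 0 < α * s ^ p + β * s ^ q := by have := hs.1; positivity
    exact (Real.rpow_pos_of_pos h0 _).ne'
  rw [inter_eq_self_of_subset_right hsub]
  simpa using hv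

lemma G_le (hα : 0 < α) (hβ : 0 < β) (hp : 0 < p) (hq : 0 < q) (hk : 0 < k)
    (hkp : k * p < 1) (hkq : 1 < k * q) {v : ℝ} (hv : 0 < v) :
    (∫ s in (0:ℝ)..v, (α * s ^ p + β * s ^ q) ^ (-k))
      ≤ ∫ s in Ioi (0:ℝ), (α * s ^ p + β * s ^ q) ^ (-k) := by
  rw [intervalIntegral.integral_of_le hv.le]
  apply setIntegral_mono_set (F_integrable hα hβ hp hq hk hkp hkq)
  · refine (ae_restrict_iff' measurableSet_Ioi).mpr ?_
    filter_upwards with s hs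
    have : 0 < α * s ^ p + β * s ^ q := by have : 0 < s := hs; positivity
    simp only [Pi.zero_apply]
    positivity
  · exact HasSubset.Subset.eventuallyLE Ioc_subset_Ioi_self

lemma mul_sign_nonneg (y : ℝ) : 0 ≤ y * Real.sign y := by
  rcases lt_trichotomy y 0 with h | h | h
  · rw [Real.sign_of_neg h]; nlinarith
  · simp [h]
  · rw [Real.sign_of_pos h]; nlinarith

lemma no_pos (hα : 0 < α) (hβ : 0 < β) (hp : 0 < p) (hq : 0 < q) (hk : 0 < k)
    (hkp : k * p < 1) (hkq : 1 < k * q)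
    (x : ℝ → ℝ)
    (hx : ∀ t, 0 ≤ t →
      HasDerivAt x (-((α * |x t| ^ p + β * |x t| ^ q) ^ k) * Real.sign (x t)) t)
    (T : ℝ) (hT : (∫ s in Ioi (0:ℝ), (α * s ^ p + β * s ^ q) ^ (-k)) ≤ T)
    (hposT : 0 < x T) : False := by
  have hT0 : 0 ≤ T := by
    refine le_trans ?_ hT
    apply setIntegral_nonneg measurableSet_Ioi
    intro s hs
    have : 0 < s := hs
    positivity
  -- the square of x is nonincreasing on [0, ∞)
  have hcx : ContinuousOn x (Ici 0) :=
    fun t ht => ((hx t ht).continuousAt).continuousWithinAt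
  have hganti : AntitoneOn (fun t => x t * x t) (Ici (0:ℝ)) := by
    apply antitoneOn_of_deriv_nonpos (convex_Ici 0) (hcx.mul hcx)
    · intro t ht
      rw [interior_Ici] at ht
      exact ((hx t (le_of_lt ht)).mul (hx t (le_of_lt ht))).differentiableAt.differentiableWithinAt
    · intro t ht
      rw [interior_Ici] at ht
      have hd := (hx t (le_of_lt ht)).mul (hx t (le_of_lt ht))
      rw [hd.deriv]
      have h1 : 0 ≤ (α * |x t| ^ p + β * |x t| ^ q) ^ k := by positivity
      have h2 := mul_sign_nonneg (x t)
      nlinarith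
  -- x is positive on [0, T]
  have hxpos : ∀ s ∈ Icc (0:ℝ) T, 0 < x s := by
    intro s hs
    by_contra hle
    push_neg at hle
    have hIcc : Icc s T ⊆ Ici (0:ℝ) := fun u hu => le_trans hs.1 hu.1
    have hivt : (0:ℝ) ∈ Icc (x s) (x T) := ⟨hle, hposT.le⟩
    obtain ⟨c, hc, hxc⟩ := intermediate_value_Icc hs.2 (hcx.mono hIcc) hivt
    have hcT : x T * x T ≤ x c * x c :=
      hganti (hIcc hc) hT0 hc.2
    rw [hxc] at hcT
    nlinarith
  -- the function t ↦ G (x t) + t has zero derivative on (0, T)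
  set G : ℝ → ℝ := fun w => ∫ s in (0:ℝ)..w, (α * s ^ p + β * s ^ q) ^ (-k) with hG_def
  set H : ℝ → ℝ := fun t => G (x t) + t with hH_def
  have hHderiv : ∀ t ∈ Ioo (0:ℝ) T, HasDerivAt H 0 t := by
    intro t ht
    have hxt : 0 < x t := hxpos t ⟨ht.1.le, ht.2.le⟩
    have hxd := hx t ht.1.le
    rw [Real.sign_of_pos hxt, mul_one, abs_of_pos hxt] at hxd
    have hGd := G_hasDerivAt hα hβ hp hq hk hkp hkq hxt
    have hA : 0 < α * x t ^ p + β * x t ^ q := by positivity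
    have hcomp := (hGd.comp t hxd).add ((hasDerivAt_id t))
    have hval : (α * x t ^ p + β * x t ^ q) ^ (-k) * -(α * x t ^ p + β * x t ^ q) ^ k + 1
        = 0 := by
      rw [Real.rpow_neg hA.le, mul_neg, inv_mul_cancel₀ (Real.rpow_pos_of_pos hA k).ne']
      ring
    rw [hval] at hcomp
    exact hcomp
  -- H is constant on [0, T]
  have hHcont : ContinuousOn H (Icc 0 T) := by
    intro t ht
    have hxt : 0 < x t := hxpos t ht
    have hGd := G_hasDerivAt hα hβ hp hq hk hkp hkq hxt
    have : ContinuousAt H t := by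
      exact ((hGd.continuousAt.comp (hx t ht.1).continuousAt).add continuousAt_id)
    exact this.continuousWithinAt
  have hHdiff : DifferentiableOn ℝ H (interior (Icc 0 T)) := by
    rw [interior_Icc]
    exact fun t ht => (hHderiv t ht).differentiableAt.differentiableWithinAt
  have hmono : MonotoneOn H (Icc 0 T) := by
    apply monotoneOn_of_deriv_nonneg (convex_Icc 0 T) hHcont hHdiff
    intro t ht
    rw [interior_Icc] at ht
    rw [(hHderiv t ht).deriv]
  have hanti : AntitoneOn H (Icc 0 T) := by
    apply antitoneOn_of_deriv_nonpos (convex_Icc 0 T) hHcont hHdiff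
    intro t ht
    rw [interior_Icc] at ht
    rw [(hHderiv t ht).deriv]
  have hmem0 : (0:ℝ) ∈ Icc (0:ℝ) T := ⟨le_refl 0, hT0⟩
  have hmemT : T ∈ Icc (0:ℝ) T := ⟨hT0, le_refl T⟩
  have hHeq : H 0 = H T :=
    le_antisymm (hmono hmem0 hmemT hT0) (hanti hmem0 hmemT hT0)
  -- conclude
  have hx0 : 0 < x 0 := hxpos 0 hmem0
  have h1 : G (x 0) = G (x T) + T := by
    have := hHeq
    simp only [hH_def, add_zero] at this
    linarith [this]
  have h2 : 0 < G (x T) := G_pos hα hβ hp hq hk hkp hkq hposT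
  have h3 : G (x 0) ≤ ∫ s in Ioi (0:ℝ), (α * s ^ p + β * s ^ q) ^ (-k) :=
    G_le hα hβ hp hq hk hkp hkq hx0
  linarith

end main

/-- Any solution of `x' = -(α|x|^p + β|x|^q)^k sign(x)` (for `t ≥ 0`)
reaches the origin no later than time `γ(α,β,p,q,k)`, regardless of `x 0`. -/
theorem predefined_time_scalar_convergence
    (α β p q k : ℝ) (hα : 0 < α) (hβ : 0 < β) (hp : 0 < p) (hq : 0 < q) (hk : 0 < k)
    (hkp : k * p < 1) (hkq : 1 < k * q)
    (x : ℝ → ℝ)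
    (hx : ∀ t, 0 ≤ t →
      HasDerivAt x (-((α * |x t| ^ p + β * |x t| ^ q) ^ k) * Real.sign (x t)) t) :
    ∀ t, Real.Gamma ((1 - k * p) / (q - p)) * Real.Gamma ((k * q - 1) / (q - p)) /
        (α ^ k * Real.Gamma k * (q - p)) * (α / β) ^ ((1 - k * p) / (q - p)) ≤ t →
      x t = 0 := by
  intro t ht
  rw [← F_integral_value hα hβ hp hq hk hkp hkq] at ht
  rcases lt_trichotomy (x t) 0 with hlt | heq | hgt
  · exfalso
    set y : ℝ → ℝ := fun s => -x s with hy_def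
    have hy : ∀ s, 0 ≤ s →
        HasDerivAt y (-((α * |y s| ^ p + β * |y s| ^ q) ^ k) * Real.sign (y s)) s := by
      intro s hs
      have hd := (hx s hs).neg
      refine hd.congr_deriv ?_
      simp only [hy_def, abs_neg, Real.sign_neg]
      ring
    exact no_pos hα hβ hp hq hk hkp hkq y hy t ht (by simpa [hy_def] using hlt)
  · exact heq
  · exact absurd hgt (fun h => no_pos hα hβ hp hq hk hkp hkq x hx t ht h)
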